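/- Let τ > 1, 0 < η ≤ 1, L > 0 and L_{−1} > 0 be real numbers. Let (L_i)_{i ≥ −1} be a sequence of positive reals and (n_i)_{i ≥ 0} a sequence of positive integers such that L_i = η·L_{i−1}·τ^{n_i − 1} for every i ≥ 0, and suppose L_t ≤ max{τ·L, L_{−1}}. Then the total count n of evaluations satisfies: Σ_{i=0}^{t} n_i ≤ (1 − log η / log τ)·(t + 1) + (1/log τ)·max{log(τ·L/L_{−1}), 0}. -/

import Mathlib

/-- Bound on the total number of evaluations of the sufficient decrease condition in the
backtracking line-search. Here `Lseq 0` plays the role of the initial estimate `L₋₁` and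
`Lseq (i+1)` the estimate accepted at iteration `i`, so that
`Lseq (i+1) = η · Lseq i · τ^(nᵢ − 1)`. -/
theorem stmt_3 (τ η L : ℝ) (hτ : 1 < τ) (hη0 : 0 < η) (hη1 : η ≤ 1) (hL : 0 < L)
    (t : ℕ) (Lseq : ℕ → ℝ) (hLpos : ∀ i, 0 < Lseq i) (n : ℕ → ℕ) (hn : ∀ i, 1 ≤ n i)
    (hrec : ∀ i ≤ t, Lseq (i + 1) = η * Lseq i * τ ^ (n i - 1))
    (hbound : Lseq (t + 1) ≤ max (τ * L) (Lseq 0)) :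
    (∑ i ∈ Finset.range (t + 1), (n i : ℝ))
      ≤ (1 - Real.log η / Real.log τ) * (t + 1)
        + (1 / Real.log τ) * max (Real.log (τ * L / Lseq 0)) 0 := by
  have hτ0 : (0:ℝ) < τ := lt_trans one_pos hτ
  have hlogτ : 0 < Real.log τ := Real.log_pos hτ
  -- telescoped log identity
  have key : ∀ j, j ≤ t + 1 →
      Real.log (Lseq j) = Real.log (Lseq 0) + j * Real.log η
        + (∑ i ∈ Finset.range j, ((n i : ℝ) - 1)) * Real.log τ := by
    intro j hj
    induction j with
    | zero => simp
    | succ k ih =>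
      have hk : k ≤ t := Nat.lt_succ_iff.mp hj
      have hrk := hrec k hk
      have h1 : Real.log (Lseq (k + 1)) = Real.log η + Real.log (Lseq k)
          + ((n k : ℝ) - 1) * Real.log τ := by
        rw [hrk, Real.log_mul (mul_pos hη0 (hLpos k)).ne' (pow_pos hτ0 _).ne',
          Real.log_mul hη0.ne' (hLpos k).ne', Real.log_pow]
        have : ((n k - 1 : ℕ) : ℝ) = (n k : ℝ) - 1 := by
          have := hn k; push_cast [Nat.cast_sub this]; ring
        rw [this]
      rw [h1, ih (le_of_lt hj), Finset.sum_range_succ]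
      push_cast
      ring
  have hkey := key (t + 1) le_rfl
  -- bound on log difference
  have hlogb : Real.log (Lseq (t + 1)) - Real.log (Lseq 0)
      ≤ max (Real.log (τ * L / Lseq 0)) 0 := by
    have h1 : Real.log (Lseq (t + 1)) ≤ max (Real.log (τ * L)) (Real.log (Lseq 0)) := by
      rcases le_max_iff.mp hbound with h | h
      · exact le_max_of_le_left (Real.log_le_log (hLpos _) h)
      · exact le_max_of_le_right (Real.log_le_log (hLpos _) h)
    have h2 : Real.log (τ * L / Lseq 0) = Real.log (τ * L) - Real.log (Lseq 0) :=
      Real.log_div (by positivity) (hLpos 0).ne'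
    rcases le_max_iff.mp h1 with h | h
    · calc Real.log (Lseq (t+1)) - Real.log (Lseq 0)
          ≤ Real.log (τ * L) - Real.log (Lseq 0) := by linarith
        _ ≤ _ := by rw [← h2]; exact le_max_left _ _
    · have : Real.log (Lseq (t+1)) - Real.log (Lseq 0) ≤ 0 := by linarith
      exact this.trans (le_max_right _ _)
  set S : ℝ := ∑ i ∈ Finset.range (t + 1), ((n i : ℝ) - 1) with hS
  have hsum : (∑ i ∈ Finset.range (t + 1), (n i : ℝ)) = S + (t + 1) := by
    rw [hS, Finset.sum_sub_distrib]
    simp [Finset.sum_const]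
  push_cast at hkey
  have hSle : S * Real.log τ ≤ max (Real.log (τ * L / Lseq 0)) 0 - (t + 1) * Real.log η := by
    nlinarith [hkey, hlogb]
  have hS2 : S ≤ (max (Real.log (τ * L / Lseq 0)) 0 - (t + 1) * Real.log η) / Real.log τ :=
    (le_div_iff₀ hlogτ).mpr hSle
  have expand : (1 - Real.log η / Real.log τ) * (t + 1)
      + (1 / Real.log τ) * max (Real.log (τ * L / Lseq 0)) 0
      = (t + 1) + (max (Real.log (τ * L / Lseq 0)) 0 - (t + 1) * Real.log η) / Real.log τ := by
    field_simp
    ring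
  rw [hsum, expand]
  linarith
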